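/- Let A be a noetherian, locally finite, ℕ-graded prime k-algebra, and let B be a graded k-subalgebra of A such that dim_k A/B < ∞. Then A is projectively simple if and only if B is projectively simple. -/

import Mathlib

/-!
STATEMENT 7: Let `A` be a noetherian, locally finite, ℕ-graded prime `k`-algebra and `B`
a graded `k`-subalgebra with `dim_k A/B < ∞`.  Then `A` is projectively simple iff `B`
is projectively simple.

Projective simplicity of a graded subalgebra `B ⊆ A` (with grading `Bₙ = B ∩ Aₙ`) is
expressed internally to `A`: the two-sided ideals of `B` are the `k`-submodules
`I ≤ B` with `B·I ⊆ I` and `I·B ⊆ I`, such an ideal is graded iff it is closed under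
taking homogeneous components (w.r.t. the grading of `A`), and `dim_k B/I` is the
dimension of the quotient of the corresponding `k`-submodules.  Taking `B = ⊤` recovers
projective simplicity of `A` itself.
-/


open DirectSum Submodule
open scoped Classical

section Helpers

variable {k : Type*} [Field k] {A : Type*} [Ring A] [Algebra k A]
variable (𝒜 : ℕ → Submodule k A) [GradedAlgebra 𝒜]

/-- The `n`-th homogeneous component, as a linear map `A →ₗ[k] A`. -/
noncomputable def cmpMap (n : ℕ) : A →ₗ[k] A :=
  (𝒜 n).subtype ∘ₗ (DirectSum.component k ℕ (fun i => ↥(𝒜 i)) n) ∘ₗ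
    (DirectSum.decomposeLinearEquiv 𝒜).toLinearMap

lemma cmpMap_apply (n : ℕ) (x : A) :
    cmpMap 𝒜 n x = (DirectSum.decompose 𝒜 x n : A) := rfl

lemma cmp_sum {ι' : Type*} (s : Finset ι') (f : ι' → A) (n : ℕ) :
    (DirectSum.decompose 𝒜 (∑ i ∈ s, f i) n : A)
      = ∑ i ∈ s, (DirectSum.decompose 𝒜 (f i) n : A) := by
  rw [← cmpMap_apply, map_sum]
  simp [cmpMap_apply]

lemma cmp_mul_homog {a b : A} {i j n : ℕ} (ha : a ∈ 𝒜 i) (hb : b ∈ 𝒜 j) :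
    (DirectSum.decompose 𝒜 (a * b) n : A) = if n = i + j then a * b else 0 := by
  have hab : a * b ∈ 𝒜 (i + j) := SetLike.mul_mem_graded ha hb
  split
  · next h => subst h; exact DirectSum.decompose_of_mem_same 𝒜 hab
  · next h => exact DirectSum.decompose_of_mem_ne 𝒜 hab (fun hh => h hh.symm)

lemma cmp_mul_expand (x y : A) (n : ℕ) :
    (DirectSum.decompose 𝒜 (x * y) n : A)
      = ∑ i ∈ (DirectSum.decompose 𝒜 x).support,
          ∑ j ∈ (DirectSum.decompose 𝒜 y).support,
            (DirectSum.decompose 𝒜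
              ((DirectSum.decompose 𝒜 x i : A) * (DirectSum.decompose 𝒜 y j : A)) n : A) := by
  conv_lhs => rw [← DirectSum.sum_support_decompose 𝒜 x,
    ← DirectSum.sum_support_decompose 𝒜 y]
  rw [Finset.sum_mul_sum, cmp_sum]
  exact Finset.sum_congr rfl fun i _ => cmp_sum 𝒜 _ _ n

end Helpers
section Helpers2

variable {k : Type*} [Field k] {A : Type*} [Ring A] [Algebra k A]
variable (𝒜 : ℕ → Submodule k A) [GradedAlgebra 𝒜]

lemma graded_mul {P Q : Submodule k A}
    (hP : ∀ x ∈ P, ∀ n, (DirectSum.decompose 𝒜 x n : A) ∈ P)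
    (hQ : ∀ x ∈ Q, ∀ n, (DirectSum.decompose 𝒜 x n : A) ∈ Q) :
    ∀ x ∈ P * Q, ∀ n, (DirectSum.decompose 𝒜 x n : A) ∈ P * Q := by
  intro x hx
  refine Submodule.mul_induction_on hx ?_ ?_
  · intro m hm q hq n
    rw [cmp_mul_expand]
    refine sum_mem fun i _ => sum_mem fun j _ => ?_
    rw [cmp_mul_homog 𝒜 (SetLike.coe_mem _) (SetLike.coe_mem _)]
    split
    · exact Submodule.mul_mem_mul (hP m hm i) (hQ q hq j)
    · exact zero_mem _
  · intro a b ha hb n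
    have : (DirectSum.decompose 𝒜 (a + b) n : A)
        = (DirectSum.decompose 𝒜 a n : A) + (DirectSum.decompose 𝒜 b n : A) := by
      rw [DirectSum.decompose_add]; rfl
    rw [this]
    exact add_mem (ha n) (hb n)

/-- The "tail" ideal `A_{≥ n₀}`. -/
noncomputable def tailIdeal (n₀ : ℕ) : Submodule k A where
  carrier := {x | ∀ m < n₀, (DirectSum.decompose 𝒜 x m : A) = 0}
  zero_mem' := by intro m _; rw [DirectSum.decompose_zero]; rfl
  add_mem' := by
    intro a b ha hb m hm
    have : (DirectSum.decompose 𝒜 (a + b) m : A)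
        = (DirectSum.decompose 𝒜 a m : A) + (DirectSum.decompose 𝒜 b m : A) := by
      rw [DirectSum.decompose_add]; rfl
    rw [this, ha m hm, hb m hm, add_zero]
  smul_mem' := by
    intro c x hx m hm
    have : (DirectSum.decompose 𝒜 (c • x) m : A) = c • (DirectSum.decompose 𝒜 x m : A) := by
      rw [DirectSum.decompose_smul]; rfl
    rw [this, hx m hm, smul_zero]

lemma mem_tailIdeal {n₀ : ℕ} {x : A} :
    x ∈ tailIdeal 𝒜 n₀ ↔ ∀ m < n₀, (DirectSum.decompose 𝒜 x m : A) = 0 := Iff.rfl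

lemma homog_mem_tailIdeal {n₀ n : ℕ} (hn : n₀ ≤ n) {x : A} (hx : x ∈ 𝒜 n) :
    x ∈ tailIdeal 𝒜 n₀ := by
  intro m hm
  exact DirectSum.decompose_of_mem_ne 𝒜 hx (fun h => absurd (h ▸ hn) (not_le.2 hm))

lemma tailIdeal_graded {n₀ : ℕ} :
    ∀ x ∈ tailIdeal 𝒜 n₀, ∀ n, (DirectSum.decompose 𝒜 x n : A) ∈ tailIdeal 𝒜 n₀ := by
  intro x hx n m hm
  by_cases h : m = n
  · subst h
    have : (DirectSum.decompose 𝒜 x m : A) ∈ 𝒜 m := SetLike.coe_mem _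
    rw [DirectSum.decompose_of_mem_same 𝒜 this]
    exact hx m hm
  · exact DirectSum.decompose_of_mem_ne 𝒜 (SetLike.coe_mem _) (fun hh => h hh.symm)

lemma tailIdeal_mul_left {n₀ : ℕ} (a : A) {x : A} (hx : x ∈ tailIdeal 𝒜 n₀) :
    a * x ∈ tailIdeal 𝒜 n₀ := by
  intro m hm
  rw [cmp_mul_expand]
  refine Finset.sum_eq_zero fun i _ => Finset.sum_eq_zero fun j _ => ?_
  rw [cmp_mul_homog 𝒜 (SetLike.coe_mem _) (SetLike.coe_mem _)]
  split
  · next h =>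
    have hj : j < n₀ := lt_of_le_of_lt (le_trans (Nat.le_add_left j i) (le_of_eq h.symm)) hm
    rw [hx j hj, mul_zero]
  · rfl

lemma tailIdeal_mul_right {n₀ : ℕ} (a : A) {x : A} (hx : x ∈ tailIdeal 𝒜 n₀) :
    x * a ∈ tailIdeal 𝒜 n₀ := by
  intro m hm
  rw [cmp_mul_expand]
  refine Finset.sum_eq_zero fun i _ => Finset.sum_eq_zero fun j _ => ?_
  rw [cmp_mul_homog 𝒜 (SetLike.coe_mem _) (SetLike.coe_mem _)]
  split
  · next h =>
    have hi : i < n₀ := lt_of_le_of_lt (le_trans (Nat.le_add_right i j) (le_of_eq h.symm)) hm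
    rw [hx i hi, zero_mul]
  · rfl

lemma tailIdeal_le {n₀ : ℕ} {P : Submodule k A} (hP : ∀ n, n₀ ≤ n → 𝒜 n ≤ P) :
    tailIdeal 𝒜 n₀ ≤ P := by
  intro x hx
  rw [← DirectSum.sum_support_decompose 𝒜 x]
  refine sum_mem fun n _ => ?_
  by_cases h : n₀ ≤ n
  · exact hP n h (SetLike.coe_mem _)
  · rw [hx n (not_le.1 h)]; exact zero_mem _

lemma tailIdeal_ne_bot {n₀ : ℕ} (hlf : ∀ n, FiniteDimensional k (𝒜 n))
    (hA : ¬ FiniteDimensional k A) : tailIdeal 𝒜 n₀ ≠ ⊥ := by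
  intro hbot
  apply hA
  have hzero : ∀ n, n₀ ≤ n → 𝒜 n = ⊥ := by
    intro n hn
    rw [eq_bot_iff]
    intro x hx
    have : x ∈ tailIdeal 𝒜 n₀ := homog_mem_tailIdeal 𝒜 hn hx
    rw [hbot] at this
    exact this
  have htop : ((Finset.range n₀).sup 𝒜) = (⊤ : Submodule k A) := by
    rw [eq_top_iff]
    intro x _
    rw [← DirectSum.sum_support_decompose 𝒜 x]
    refine sum_mem fun n _ => ?_
    by_cases h : n < n₀
    · exact (Finset.le_sup (f := 𝒜) (Finset.mem_range.2 h)) (SetLike.coe_mem _)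
    · have : (DirectSum.decompose 𝒜 x n : A) ∈ (⊥ : Submodule k A) := by
        rw [← hzero n (not_lt.1 h)]; exact SetLike.coe_mem _
      rw [(Submodule.mem_bot k).1 this]
      exact zero_mem _
  have h1 : FiniteDimensional k ↥((Finset.range n₀).sup 𝒜) :=
    Submodule.finiteDimensional_finset_sup _ _
  rw [htop] at h1
  haveI := h1
  exact Module.Finite.equiv (Submodule.topEquiv (R := k) (M := A))

end Helpers2
section Helpers3

variable {k : Type*} [Field k] {M : Type*} [AddCommGroup M] [Module k M]

lemma fd_quot_mono {K J : Submodule k M} (h : K ≤ J) (hfd : FiniteDimensional k (M ⧸ K)) :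
    FiniteDimensional k (M ⧸ J) := by
  haveI := hfd
  refine FiniteDimensional.of_surjective (Submodule.mapQ K J LinearMap.id h) ?_
  intro z
  obtain ⟨x, rfl⟩ := Submodule.mkQ_surjective J z
  exact ⟨Submodule.Quotient.mk x, by rw [Submodule.mapQ_apply]; rfl⟩

lemma fd_restrict (P : Submodule k M) {K : Submodule k M}
    (hfd : FiniteDimensional k (M ⧸ K)) :
    FiniteDimensional k (↥P ⧸ K.comap P.subtype) := by
  haveI := hfd
  set f : ↥P →ₗ[k] M ⧸ K := K.mkQ ∘ₗ P.subtype with hf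
  have hker : K.comap P.subtype = LinearMap.ker f := by
    rw [hf, LinearMap.ker_comp, Submodule.ker_mkQ]
  haveI : FiniteDimensional k (LinearMap.range f) := inferInstance
  exact Module.Finite.equiv
    (((Submodule.quotEquivOfEq _ _ hker).trans f.quotKerEquivRange).symm)

lemma fd_of_sub_quot {P K : Submodule k M} (hKP : K ≤ P)
    (hquot : FiniteDimensional k (M ⧸ P))
    (hfd : FiniteDimensional k (↥P ⧸ K.comap P.subtype)) :
    FiniteDimensional k (M ⧸ K) := by
  haveI := hquot; haveI := hfd
  set f : ↥P →ₗ[k] M ⧸ K := K.mkQ ∘ₗ P.subtype with hf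
  have hker : K.comap P.subtype = LinearMap.ker f := by
    rw [hf, LinearMap.ker_comp, Submodule.ker_mkQ]
  have hrange : LinearMap.range f = P.map K.mkQ := by
    rw [hf, LinearMap.range_comp, Submodule.range_subtype]
  have hS : FiniteDimensional k ↥(P.map K.mkQ) := by
    rw [← hrange]
    exact Module.Finite.equiv
      ((Submodule.quotEquivOfEq _ _ hker).trans f.quotKerEquivRange)
  have hQ : FiniteDimensional k ((M ⧸ K) ⧸ P.map K.mkQ) :=
    Module.Finite.equiv (Submodule.quotientQuotientEquivQuotient K P hKP).symm
  exact IsNoetherian.iff_fg.1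
    ((isNoetherian_iff_submodule_quotient (P.map K.mkQ)).2
      ⟨IsNoetherian.iff_fg.2 hS, IsNoetherian.iff_fg.2 hQ⟩)

lemma fd_of_fd_sub_quot (P : Submodule k M) (h1 : FiniteDimensional k ↥P)
    (h2 : FiniteDimensional k (M ⧸ P)) : FiniteDimensional k M :=
  IsNoetherian.iff_fg.1
    ((isNoetherian_iff_submodule_quotient P).2
      ⟨IsNoetherian.iff_fg.2 h1, IsNoetherian.iff_fg.2 h2⟩)

end Helpers3

section Helpers4

variable {k : Type*} [Field k] {A : Type*} [Ring A] [Algebra k A]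
variable (𝒜 : ℕ → Submodule k A) [GradedAlgebra 𝒜]

lemma exists_n0 (B : Subalgebra k A)
    (hBgraded : ∀ x ∈ B, ∀ n, (DirectSum.decompose 𝒜 x n : A) ∈ B)
    (hcodim : FiniteDimensional k (A ⧸ B.toSubmodule)) :
    ∃ n₀ : ℕ, ∀ n, n₀ ≤ n → 𝒜 n ≤ B.toSubmodule := by
  haveI := hcodim
  haveI : IsNoetherian k (A ⧸ B.toSubmodule) := IsNoetherian.iff_fg.2 hcodim
  set q := B.toSubmodule.mkQ with hq
  set T : ℕ →o Submodule k (A ⧸ B.toSubmodule) :=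
    ⟨fun n => ((Finset.range n).sup 𝒜).map q,
     fun a b hab => Submodule.map_mono (Finset.sup_mono (by
        exact Finset.range_subset_range.2 hab))⟩ with hT
  obtain ⟨N, hN⟩ := monotone_stabilizes_iff_noetherian.2 inferInstance T
  refine ⟨N, fun n hn x hx => ?_⟩
  have h1 : q x ∈ T (n + 1) :=
    Submodule.mem_map_of_mem ((Finset.le_sup (f := 𝒜) (Finset.mem_range.2 (Nat.lt_succ_self n))) hx)
  have h2 : q x ∈ T n := by
    rw [← hN n hn, hN (n + 1) (le_trans hn (Nat.le_succ n))]
    exact h1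
  obtain ⟨y, hy, hqy⟩ := Submodule.mem_map.1 h2
  have hxy : y - x ∈ B.toSubmodule := (Submodule.Quotient.eq _).1 hqy
  have hyn : (DirectSum.decompose 𝒜 y n : A) = 0 := by
    have hle : (Finset.range n).sup 𝒜 ≤ LinearMap.ker (cmpMap 𝒜 n) := by
      refine Finset.sup_le fun m hm => ?_
      intro z hz
      rw [LinearMap.mem_ker, cmpMap_apply]
      refine DirectSum.decompose_of_mem_ne 𝒜 hz fun h => ?_
      subst h
      exact absurd (Finset.mem_range.1 hm) (lt_irrefl m)
    have := hle hy
    rw [LinearMap.mem_ker, cmpMap_apply] at this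
    exact this
  have hmem : (DirectSum.decompose 𝒜 (y - x) n : A) ∈ B := hBgraded _ hxy n
  have : (DirectSum.decompose 𝒜 (y - x) n : A)
      = (DirectSum.decompose 𝒜 y n : A) - (DirectSum.decompose 𝒜 x n : A) := by
    rw [← cmpMap_apply, ← cmpMap_apply, ← cmpMap_apply, map_sub]
  rw [this, hyn, DirectSum.decompose_of_mem_same 𝒜 hx, zero_sub] at hmem
  have := neg_mem hmem
  rw [neg_neg] at this
  exact this

end Helpers4
section KeyK

variable {k : Type*} [Field k] {A : Type*} [Ring A] [Algebra k A]
variable (𝒜 : ℕ → Submodule k A) [GradedAlgebra 𝒜]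

lemma key_K (n₀ : ℕ)
    (hprime : ∀ a b : A, (∀ x : A, a * x * b = 0) → a = 0 ∨ b = 0)
    {I : Submodule k A} (hIne : I ≠ ⊥) (hCne : tailIdeal 𝒜 n₀ ≠ ⊥)
    (hCI : ∀ c ∈ tailIdeal 𝒜 n₀, ∀ x ∈ I, c * x ∈ I ∧ x * c ∈ I)
    (hIgr : ∀ x ∈ I, ∀ n, (DirectSum.decompose 𝒜 x n : A) ∈ I) :
    ∃ K : Submodule k A, K ≠ ⊥ ∧ K ≤ I ∧ K ≤ tailIdeal 𝒜 n₀ ∧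
      (∀ a : A, ∀ x ∈ K, a * x ∈ K ∧ x * a ∈ K) ∧
      (∀ x ∈ K, ∀ n, (DirectSum.decompose 𝒜 x n : A) ∈ K) := by
  set C := tailIdeal 𝒜 n₀ with hC
  set K := C * I * C with hK
  have hTC : (⊤ : Submodule k A) * C ≤ C :=
    Submodule.mul_le.2 fun a _ c hc => tailIdeal_mul_left 𝒜 a hc
  have hCT : C * (⊤ : Submodule k A) ≤ C :=
    Submodule.mul_le.2 fun c hc a _ => tailIdeal_mul_right 𝒜 a hc
  have hCImem : C * I ≤ I := Submodule.mul_le.2 fun c hc i hi => (hCI c hc i hi).1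
  have hKI : K ≤ I :=
    Submodule.mul_le.2 fun u hu c hc => (hCI c hc u (hCImem hu)).2
  have hKC : K ≤ C :=
    Submodule.mul_le.2 fun u _ c hc => tailIdeal_mul_left 𝒜 u hc
  have hTK : (⊤ : Submodule k A) * K ≤ K := by
    calc (⊤ : Submodule k A) * (C * I * C) = (⊤ : Submodule k A) * (C * I) * C :=
          (mul_assoc _ _ _).symm
      _ = (⊤ : Submodule k A) * C * I * C := by rw [← mul_assoc ⊤ C I]
      _ ≤ C * I * C :=
          mul_le_mul' (mul_le_mul' hTC le_rfl) le_rfl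
  have hKT : K * (⊤ : Submodule k A) ≤ K := by
    calc C * I * C * (⊤ : Submodule k A) = C * I * (C * ⊤) := mul_assoc (C * I) C ⊤
      _ ≤ C * I * C := mul_le_mul' le_rfl hCT
  have hKmul : ∀ a : A, ∀ x ∈ K, a * x ∈ K ∧ x * a ∈ K := by
    intro a x hx
    exact ⟨hTK (Submodule.mul_mem_mul Submodule.mem_top hx),
           hKT (Submodule.mul_mem_mul hx Submodule.mem_top)⟩
  have hKgr : ∀ x ∈ K, ∀ n, (DirectSum.decompose 𝒜 x n : A) ∈ K :=
    graded_mul 𝒜 (graded_mul 𝒜 (tailIdeal_graded 𝒜) hIgr) (tailIdeal_graded 𝒜)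
  have hKne : K ≠ ⊥ := by
    obtain ⟨c, hc, hc0⟩ := (Submodule.ne_bot_iff _).1 hCne
    obtain ⟨i, hi, hi0⟩ := (Submodule.ne_bot_iff _).1 hIne
    have step1 : ∃ x, c * x * i ≠ 0 := by
      by_contra h
      push_neg at h
      rcases hprime c i h with h' | h'
      · exact hc0 h'
      · exact hi0 h'
    obtain ⟨x, hx⟩ := step1
    have step2 : ∃ y, c * x * i * y * c ≠ 0 := by
      by_contra h
      push_neg at h
      rcases hprime (c * x * i) c h with h' | h'
      · exact hx h'
      · exact hc0 h'
    obtain ⟨y, hy⟩ := step2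
    have hz : c * x * i * (y * c) ∈ C * I * C :=
      Submodule.mul_mem_mul
        (Submodule.mul_mem_mul (tailIdeal_mul_right 𝒜 x hc) hi)
        (tailIdeal_mul_left 𝒜 y hc)
    have hzz : c * x * i * (y * c) = c * x * i * y * c := (mul_assoc _ y c).symm
    rw [hzz] at hz
    exact (Submodule.ne_bot_iff _).2 ⟨_, hz, hy⟩
  exact ⟨K, hKne, hKI, hKC, hKmul, hKgr⟩

end KeyK

/-- Projective simplicity of a graded subalgebra `B` of the ℕ-graded `k`-algebra `A`,
with grading `Bₙ = B ∩ Aₙ`. -/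
def SubProjSimple {k A : Type*} [Field k] [Ring A] [Algebra k A]
    (𝒜 : ℕ → Submodule k A) [GradedAlgebra 𝒜] (B : Subalgebra k A) : Prop :=
  ¬ FiniteDimensional k B ∧
  ∀ I : Submodule k A, I ≤ B.toSubmodule → I ≠ ⊥ →
    (∀ b ∈ B, ∀ x ∈ I, b * x ∈ I ∧ x * b ∈ I) →
    (∀ x ∈ I, ∀ n, (DirectSum.decompose 𝒜 x n : A) ∈ I) →
    FiniteDimensional k (↥B.toSubmodule ⧸ (I.comap B.toSubmodule.subtype))

theorem projectively_simple_iff_finite_codim_subalgebra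
    (k : Type*) [Field k] {A : Type*} [Ring A] [Algebra k A]
    (𝒜 : ℕ → Submodule k A) [GradedAlgebra 𝒜]
    (hlf : ∀ n, FiniteDimensional k (𝒜 n))
    (hNoethA : IsNoetherianRing A) (hNoethAop : IsNoetherianRing Aᵐᵒᵖ)
    (hprime : ∀ a b : A, (∀ x : A, a * x * b = 0) → a = 0 ∨ b = 0)
    (B : Subalgebra k A)
    (hBgraded : ∀ x ∈ B, ∀ n, (DirectSum.decompose 𝒜 x n : A) ∈ B)
    (hcodim : FiniteDimensional k (A ⧸ B.toSubmodule)) :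
    SubProjSimple 𝒜 ⊤ ↔ SubProjSimple 𝒜 B := by

  obtain ⟨n₀, hn₀⟩ := exists_n0 𝒜 B hBgraded hcodim
  have hCB : tailIdeal 𝒜 n₀ ≤ B.toSubmodule := tailIdeal_le 𝒜 hn₀
  have htopquot : FiniteDimensional k (A ⧸ Subalgebra.toSubmodule (⊤ : Subalgebra k A)) := by
    haveI : Subsingleton (A ⧸ Subalgebra.toSubmodule (⊤ : Subalgebra k A)) :=
      by haveI := ((Submodule.unique_quotient_iff_eq_top (p := Subalgebra.toSubmodule (⊤ : Subalgebra k A))).2 Algebra.top_toSubmodule).some; infer_instance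
    exact Module.Finite.of_surjective
      (0 : k →ₗ[k] (A ⧸ Subalgebra.toSubmodule (⊤ : Subalgebra k A)))
      (fun y => ⟨0, Subsingleton.elim _ _⟩)
  constructor
  · rintro ⟨hAinf, hAsimp⟩
    have hnFDA : ¬ FiniteDimensional k A := by
      intro h
      exact hAinf inferInstance
    have hCne : tailIdeal 𝒜 n₀ ≠ ⊥ := tailIdeal_ne_bot 𝒜 hlf hnFDA
    constructor
    · intro hFB
      exact hnFDA (fd_of_fd_sub_quot B.toSubmodule
        ((Subalgebra.finiteDimensional_toSubmodule).2 hFB) hcodim)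
    · intro I hIB hIne hIbi hIgr
      obtain ⟨K, hKne, hKI, hKC, hKmul, hKgr⟩ :=
        key_K 𝒜 n₀ hprime hIne hCne (fun c hc x hx => hIbi c (hCB hc) x hx) hIgr
      have hfd := hAsimp K le_top hKne (fun b _ x hx => hKmul b x hx) hKgr
      have hfdA : FiniteDimensional k (A ⧸ K) :=
        fd_of_sub_quot (P := Subalgebra.toSubmodule (⊤ : Subalgebra k A)) le_top htopquot hfd
      have hfdI : FiniteDimensional k (A ⧸ I) := fd_quot_mono hKI hfdA
      exact fd_restrict B.toSubmodule hfdI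
  · rintro ⟨hBinf, hBsimp⟩
    have hnFDA : ¬ FiniteDimensional k A := by
      intro h
      exact hBinf inferInstance
    have hCne : tailIdeal 𝒜 n₀ ≠ ⊥ := tailIdeal_ne_bot 𝒜 hlf hnFDA
    constructor
    · intro hFtop
      haveI := hFtop
      exact hnFDA (Module.Finite.equiv (Subalgebra.topEquiv (R := k) (A := A)).toLinearEquiv)
    · intro J hJtop hJne hJbi hJgr
      obtain ⟨K, hKne, hKJ, hKC, hKmul, hKgr⟩ :=
        key_K 𝒜 n₀ hprime hJne hCne
          (fun c _ x hx => hJbi c (by trivial) x hx) hJgr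
      have hKB : K ≤ B.toSubmodule := le_trans hKC hCB
      have hfd := hBsimp K hKB hKne (fun b _ x hx => hKmul b x hx) hKgr
      have hfdA : FiniteDimensional k (A ⧸ K) := fd_of_sub_quot hKB hcodim hfd
      have hfdJ : FiniteDimensional k (A ⧸ J) := fd_quot_mono hKJ hfdA
      exact fd_restrict (Subalgebra.toSubmodule (⊤ : Subalgebra k A)) hfdJ
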